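/- (Mod 2 erasure) Fix b₁, b₂ ∈ [0,1] and integers 1 ≤ r₁ < r₂ < ⋯ < r_m = n, and set r₀ := 0. Define g_π : {0,1}ⁿ → {0,1}^m by g_π(x)_k := (x_{r_{k−1}+1} + ⋯ + x_{r_k}) mod 2. Fix 𝔦, 𝔧, 𝔨, 𝔩 ∈ {0,1}^m. For all i, j ∈ {0,1}ⁿ satisfying g_π(i) = 𝔦 and g_π(j) = 𝔧, one has Σ Lⁿ(i,j;k,l) = Lᵐ(𝔦,𝔧;𝔨,𝔩), where the sum ranges over all k, l ∈ {0,1}ⁿ with g_π(k) = 𝔨 and g_π(l) = 𝔩. -/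

import Mathlib

/-- Exponents of the indeterminates `b₁` (resp. `b₂`) appearing in a formal weight:
`e` for exponent zero (factor `1`), `pl` for the factor `bᵢ`, `mi` for the factor `1 - bᵢ`. -/
inductive Eps : Type
  | e : Eps
  | pl : Eps
  | mi : Eps
deriving DecidableEq

instance : Fintype Eps :=
  ⟨{.e, .pl, .mi}, fun x => by cases x <;> simp⟩

/-- The 10-element set of formal weights: `none` represents `0`, and `some (ε₁, ε₂)`
represents the monomial `f₁(ε₁) f₂(ε₂)`. -/
abbrev Wt : Type := Option (Eps × Eps)

/-- The join operation on exponents: `a ∨ a = a`, `e ∨ a = a ∨ e = a`, and the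
clash `{+, −}` gives `none` (i.e. the factor `0`). -/
def Eps.vee : Eps → Eps → Option Eps
  | .e, a => some a
  | a, .e => some a
  | .pl, .pl => some .pl
  | .mi, .mi => some .mi
  | .pl, .mi => none
  | .mi, .pl => none

/-- The Boolean-type product `*` on the formal weight set `Wt`. -/
def wmul : Wt → Wt → Wt
  | none, _ => none
  | _, none => none
  | some (a₁, a₂), some (c₁, c₂) =>
    match a₁.vee c₁, a₂.vee c₂ with
    | some x, some y => some (x, y)
    | _, _ => none

/-- Evaluation of an exponent of `b₁`: `f₁(e) = 1`, `f₁(+) = b₁`, `f₁(−) = 1 - b₁`. -/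
def f1 (b1 : ℝ) : Eps → ℝ
  | .e => 1
  | .pl => b1
  | .mi => 1 - b1

/-- Evaluation of an exponent of `b₂`: `f₂(e) = 1`, `f₂(+) = b₂`, `f₂(−) = 1 - b₂`. -/
def f2 (b2 : ℝ) : Eps → ℝ
  | .e => 1
  | .pl => b2
  | .mi => 1 - b2

/-- The evaluation map `ev_{b₁,b₂} : W → ℝ`. -/
def ev (b1 b2 : ℝ) : Wt → ℝ
  | none => 0
  | some (x, y) => f1 b1 x * f2 b2 y

/-- The formal one-colored vertex weights `L̂¹(i, j; k, l) ∈ W`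
(`i` = bottom input, `j` = left input, `k` = top output, `l` = right output,
with `true` standing for `1`). -/
def Lhat1 : Bool → Bool → Bool → Bool → Wt
  | true, false, true, false => some (.e, .e)
  | false, true, false, true => some (.e, .e)
  | false, false, false, false => some (.e, .pl)
  | false, false, true, true => some (.e, .mi)
  | true, true, true, true => some (.pl, .e)
  | true, true, false, false => some (.mi, .e)
  | _, _, _, _ => none

/-- The `r`-fold projection `s_r(x) = (x₁ + ⋯ + x_r) mod 2` of a vector `x ∈ {0,1}ⁿ`
(here `r : Fin n` stands for the `1`-indexed level `r + 1`). -/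
def sproj {n : ℕ} (x : Fin n → Bool) (r : Fin n) : Bool :=
  decide ((∑ t ∈ Finset.univ.filter (fun t : Fin n => t ≤ r),
    (if x t then (1 : ℕ) else 0)) % 2 = 1)

/-- The formal `n`-colored vertex weight
`L̂ⁿ(i, j; k, l) = ∏*_{r=1}^n L̂¹(s_r(i), s_r(j); s_r(k), s_r(l)) ∈ W`,
where the product is taken with respect to the Boolean-type product `*`. -/
def Lhatn {n : ℕ} (i j k l : Fin n → Bool) : Wt :=
  (List.ofFn (fun r : Fin n =>
    Lhat1 (sproj i r) (sproj j r) (sproj k r) (sproj l r))).foldr wmul (some (.e, .e))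

/-- The real `n`-colored vertex weight `Lⁿ(i, j; k, l) = ev_{b₁,b₂}(L̂ⁿ(i, j; k, l))`. -/
def Ln (b1 b2 : ℝ) {n : ℕ} (i j k l : Fin n → Bool) : ℝ :=
  ev b1 b2 (Lhatn i j k l)

/-- The value `r_{k-1}` with the convention `r₀ = 0`. -/
def rprev {m : ℕ} (r : Fin m → ℕ) (k : Fin m) : ℕ :=
  if k.val = 0 then 0
  else r ⟨k.val - 1, Nat.lt_of_le_of_lt (Nat.sub_le _ _) k.isLt⟩

/-- The projection map `g_π : {0,1}ⁿ → {0,1}ᵐ` associated with the partition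
`π = {{1,…,r₁}, {r₁+1,…,r₂}, …, {r_{m-1}+1,…,r_m}}`:
`g_π(x)_k = (x_{r_{k-1}+1} + ⋯ + x_{r_k}) mod 2` (positions `p : Fin n` are `0`-indexed,
standing for the `1`-indexed coordinate `p + 1`). -/
def gpi {n m : ℕ} (r : Fin m → ℕ) (x : Fin n → Bool) (k : Fin m) : Bool :=
  decide ((∑ p ∈ Finset.univ.filter
      (fun p : Fin n => rprev r k ≤ p.val ∧ p.val < r k),
    (if x p then (1 : ℕ) else 0)) % 2 = 1)


/-! ### Auxiliary material -/

instance : CommMonoid Wt where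
  mul := wmul
  one := some (.e, .e)
  mul_assoc := by decide
  one_mul := by decide
  mul_one := by decide
  mul_comm := by decide

lemma mul_def (a b : Wt) : a * b = wmul a b := rfl

lemma wmul_none (a : Wt) : wmul a none = none := by rcases a <;> rfl

set_option maxHeartbeats 2000000 in
lemma key (b1 b2 : ℝ) (i j : Bool) (v : Wt) :
    ∑ k : Bool, ∑ l : Bool, ev b1 b2 (Lhat1 i j k l * v) = ev b1 b2 v := by
  rcases v with _ | ⟨x, y⟩
  · simp [mul_def, wmul_none, ev]
  · cases i <;> cases j <;> cases x <;> cases y <;>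
      simp [Fintype.sum_bool, mul_def, Lhat1, wmul, ev, f1, f2, Eps.vee] <;> ring

def pmB : Option (Bool × Bool) → Bool → Bool → Bool
  | some (a, c), k, l => (k == a) && (l == c)
  | none, _, _ => true

def pfac (i j : Bool) : Option (Bool × Bool) → Wt
  | some (a, c) => Lhat1 i j a c
  | none => 1

lemma boole_mul' (A : Prop) [Decidable A] (x : ℝ) :
    (if A then (1:ℝ) else 0) * x = if A then x else 0 := by split <;> simp

lemma outer (b1 b2 : ℝ) (i j : Bool) (o : Option (Bool × Bool)) (P w : Wt) :
    (∑ b : Bool, ∑ c : Bool,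
      if pmB o b c then ev b1 b2 (P * (Lhat1 i j b c * w)) else 0)
      = ev b1 b2 ((pfac i j o * P) * w) := by
  rcases o with _ | ⟨a, d⟩
  · simp only [pmB, if_true]
    simp_rw [mul_left_comm P]
    rw [key]
    simp [pfac, one_mul]
  · cases a <;> cases d <;>
      simp [Fintype.sum_bool, pmB, pfac, mul_comm, mul_assoc, mul_left_comm]

lemma main (b1 b2 : ℝ) : ∀ (n : ℕ) (I J : Fin n → Bool) (pin : Fin n → Option (Bool × Bool)) (w : Wt),
    (∑ K : Fin n → Bool, ∑ L : Fin n → Bool,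
      if (∀ r, pmB (pin r) (K r) (L r)) then
        ev b1 b2 ((∏ r, Lhat1 (I r) (J r) (K r) (L r)) * w) else 0)
      = ev b1 b2 ((∏ r, pfac (I r) (J r) (pin r)) * w) := by
  intro n
  induction n with
  | zero => intro I J pin w; simp
  | succ n ih =>
    intro I J pin w
    have step : ∀ (K L : Fin (n+1) → Bool),
        (if (∀ r, pmB (pin r) (K r) (L r)) then
          ev b1 b2 ((∏ r, Lhat1 (I r) (J r) (K r) (L r)) * w) else 0)
        = (if pmB (pin 0) (K 0) (L 0) then (1:ℝ) else 0) *
          (if (∀ r : Fin n, pmB (pin r.succ) (K r.succ) (L r.succ)) then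
            ev b1 b2 ((∏ r : Fin n, Lhat1 (I r.succ) (J r.succ) (K r.succ) (L r.succ)) *
              (Lhat1 (I 0) (J 0) (K 0) (L 0) * w)) else 0) := by
      intro K L
      rw [Fin.prod_univ_succ, boole_mul']
      have harg : (Lhat1 (I 0) (J 0) (K 0) (L 0) *
          ∏ r : Fin n, Lhat1 (I r.succ) (J r.succ) (K r.succ) (L r.succ)) * w
          = (∏ r : Fin n, Lhat1 (I r.succ) (J r.succ) (K r.succ) (L r.succ)) *
            (Lhat1 (I 0) (J 0) (K 0) (L 0) * w) := by
        rw [mul_assoc, mul_left_comm]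
      rw [harg]
      by_cases h1 : pmB (pin 0) (K 0) (L 0) = true <;>
        by_cases h2 : ∀ r : Fin n, pmB (pin r.succ) (K r.succ) (L r.succ) = true <;>
        simp [Fin.forall_fin_succ, h1, h2]
    simp_rw [step]
    have e1 : ∀ (F : (Fin (n+1) → Bool) → ℝ),
        (∑ K, F K) = ∑ b : Bool, ∑ K' : Fin n → Bool, F (Fin.cons b K') := by
      intro F
      rw [← (Fin.consEquiv (fun _ => Bool)).sum_comp F, Fintype.sum_prod_type]
      rfl
    simp_rw [e1, Fin.cons_zero, Fin.cons_succ]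
    conv_lhs => enter [2, b]; rw [Finset.sum_comm]
    simp_rw [← Finset.mul_sum, ih, boole_mul']
    rw [outer b1 b2 (I 0) (J 0) (pin 0)
      (∏ r : Fin n, pfac (I r.succ) (J r.succ) (pin r.succ)) w, Fin.prod_univ_succ]

lemma Lhatn_eq_prod {n : ℕ} (i j k l : Fin n → Bool) :
    Lhatn i j k l = ∏ t, Lhat1 (sproj i t) (sproj j t) (sproj k t) (sproj l t) := by
  rw [Lhatn, ← List.prod_ofFn, List.prod_eq_foldr]
  rfl

def cnt {n : ℕ} (x : Fin n → Bool) (a : ℕ) : ℕ :=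
  ∑ t ∈ Finset.univ.filter (fun t : Fin n => t.val < a), (if x t then 1 else 0)

lemma cnt_zero {n : ℕ} (x : Fin n → Bool) : cnt x 0 = 0 := by
  simp [cnt]

lemma sproj_eq_cnt {n : ℕ} (x : Fin n → Bool) (r : Fin n) :
    sproj x r = decide (cnt x (r.val + 1) % 2 = 1) := by
  unfold sproj cnt
  congr 2
  congr 1
  apply Finset.sum_congr
  · apply Finset.filter_congr
    intro t _
    rw [Fin.le_def, Nat.lt_succ_iff]
  · intros; rfl

lemma cnt_split {n : ℕ} (x : Fin n → Bool) {a b : ℕ} (h : a ≤ b) :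
    cnt x b = cnt x a +
      ∑ t ∈ Finset.univ.filter (fun t : Fin n => a ≤ t.val ∧ t.val < b),
        (if x t then 1 else 0) := by
  unfold cnt
  rw [← Finset.sum_filter_add_sum_filter_not (Finset.univ.filter (fun t : Fin n => t.val < b))
    (fun t => t.val < a)]
  congr 1
  · congr 1
    rw [Finset.filter_filter]
    apply Finset.filter_congr
    intro t _
    constructor
    · intro ht; exact ht.2
    · intro ht; exact ⟨lt_of_lt_of_le ht h, ht⟩
  · congr 1
    rw [Finset.filter_filter]
    apply Finset.filter_congr
    intro t _
    constructor
    · intro ht; exact ⟨Nat.le_of_not_lt ht.2, ht.1⟩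
    · intro ht; exact ⟨ht.2, Nat.not_lt.mpr ht.1⟩

lemma cnt_succ {n : ℕ} (x : Fin n → Bool) {a : ℕ} (h : a < n) :
    cnt x (a + 1) = cnt x a + (if x ⟨a, h⟩ then 1 else 0) := by
  rw [cnt_split x (Nat.le_succ a)]
  congr 1
  rw [Finset.sum_eq_single ⟨a, h⟩]
  · intro t _ ht
    exfalso
    apply ht
    have h2 := (Finset.mem_filter.mp ‹t ∈ _›).2
    have h3 : t.val = a := by omega
    exact Fin.ext (by simp [h3])
  · intro ht
    exfalso
    apply ht
    simp [Finset.mem_filter]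

section Equiv
variable {n m : ℕ} (r : Fin m → ℕ)

/-- The block sum of `x` over block `κ`. -/
def bs (x : Fin n → Bool) (κ : Fin m) : ℕ :=
  ∑ p ∈ Finset.univ.filter (fun p : Fin n => rprev r κ ≤ p.val ∧ p.val < r κ),
    (if x p then 1 else 0)

lemma gpi_eq_bs (x : Fin n → Bool) (κ : Fin m) :
    gpi r x κ = decide (bs r x κ % 2 = 1) := rfl

lemma ind_eq_of_decide (v : ℕ) (b : Bool) (hb : b = decide (v % 2 = 1)) :
    (if b then (1:ℕ) else 0) = v % 2 := by
  subst hb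
  rcases Nat.mod_two_eq_zero_or_one v with h | h <;> simp [h]

lemma rprev_le (hmono : StrictMono r) (κ : Fin m) : rprev r κ ≤ r κ := by
  unfold rprev
  split
  · exact Nat.zero_le _
  · exact le_of_lt (hmono (by rw [Fin.mk_lt_mk]; omega))

lemma rprev_succ (c : ℕ) (h : c + 1 < m) :
    rprev r ⟨c + 1, h⟩ = r ⟨c, Nat.lt_of_succ_lt h⟩ := by
  unfold rprev
  simp

lemma cnt_block (hmono : StrictMono r) (x : Fin n → Bool) (κ : Fin m) :
    cnt x (r κ) = cnt x (rprev r κ) + bs r x κ :=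
  cnt_split x (rprev_le r hmono κ)

lemma equiv_parity (hmono : StrictMono r) (x : Fin n → Bool) (fx : Fin m → Bool) :
    gpi r x = fx ↔ ∀ κ : Fin m, cnt x (r κ) % 2 = cnt fx (κ.val + 1) % 2 := by
  constructor
  · intro hg
    have hgk : ∀ κ : Fin m, (if fx κ then (1:ℕ) else 0) = bs r x κ % 2 := by
      intro κ
      exact ind_eq_of_decide _ _ (by rw [← congrFun hg κ, gpi_eq_bs])
    intro κ
    obtain ⟨cv, hcv⟩ := κ
    induction cv with
    | zero =>
      have h1 := cnt_block r hmono x ⟨0, hcv⟩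
      have h2 : rprev r (⟨0, hcv⟩ : Fin m) = 0 := by unfold rprev; simp
      have h3 := cnt_succ fx (a := 0) hcv
      have h4 := hgk ⟨0, hcv⟩
      rw [h2, cnt_zero] at h1
      rw [cnt_zero] at h3
      simp only [Fin.eta] at h3 ⊢
      omega
    | succ c ihc =>
      have hc : c < m := Nat.lt_of_succ_lt hcv
      have h1 := cnt_block r hmono x ⟨c + 1, hcv⟩
      have h2 := rprev_succ r (c := c) hcv
      have h3 := cnt_succ fx (a := c + 1) hcv
      have h4 := hgk ⟨c + 1, hcv⟩
      have h5 := ihc hc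
      rw [h2] at h1
      simp only [Fin.val_mk] at h5 h4 h3 ⊢
      omega
  · intro hS
    funext κ
    rw [gpi_eq_bs]
    have h1 := cnt_block r hmono x κ
    have h3 := hS κ
    have h2 := cnt_succ fx (a := κ.val) κ.isLt
    simp only [Fin.eta] at h2
    have h4 : cnt x (rprev r κ) % 2 = cnt fx κ.val % 2 := by
      obtain ⟨cv, hcv⟩ := κ
      cases cv with
      | zero =>
        have h2' : rprev r (⟨0, hcv⟩ : Fin m) = 0 := by unfold rprev; simp
        rw [h2', cnt_zero, cnt_zero]
      | succ c =>
        rw [rprev_succ r (c := c) hcv]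
        exact hS ⟨c, Nat.lt_of_succ_lt hcv⟩
    cases hfx : fx κ
    · rw [hfx] at h2
      norm_num at h2
      have : bs r x κ % 2 = 0 := by
        omega
      simp [this]
    · rw [hfx] at h2
      norm_num at h2
      have : bs r x κ % 2 = 1 := by
        omega
      simp [this]
end Equiv

lemma sproj_inj {n : ℕ} : Function.Injective (fun x : Fin n → Bool => sproj x) := by
  intro x y h
  simp only at h
  have hp : ∀ a, a ≤ n → cnt x a % 2 = cnt y a % 2 := by
    intro a ha
    cases a with
    | zero => simp [cnt_zero]
    | succ a =>
      have ha' : a < n := ha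
      have hs := congrFun h ⟨a, ha'⟩
      rw [sproj_eq_cnt, sproj_eq_cnt] at hs
      have := decide_eq_decide.mp hs
      simp only [Fin.val_mk] at this
      omega
  funext t
  have h1 := cnt_succ x (a := t.val) t.isLt
  have h2 := cnt_succ y (a := t.val) t.isLt
  simp only [Fin.eta] at h1 h2
  have p1 := hp t.val (le_of_lt t.isLt)
  have p2 := hp (t.val + 1) t.isLt
  cases hx : x t <;> cases hy : y t <;>
    first
    | rfl
    | (exfalso; rw [hx] at h1; rw [hy] at h2; norm_num at h1 h2; omega)

lemma sum_comp_sproj {n : ℕ} (F : (Fin n → Bool) → ℝ) :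
    ∑ k : Fin n → Bool, F (sproj k) = ∑ K : Fin n → Bool, F K :=
  Fintype.sum_bijective _ (Finite.injective_iff_bijective.mp sproj_inj) _ _ (fun _ => rfl)

lemma decide_parity_eq (u v : ℕ) :
    (decide (u % 2 = 1) = decide (v % 2 = 1)) ↔ u % 2 = v % 2 := by
  rcases Nat.mod_two_eq_zero_or_one u with h | h <;>
    rcases Nat.mod_two_eq_zero_or_one v with h' | h' <;> simp [h, h']

/-- Mod 2 erasure: for a partition `1 ≤ r₁ < ⋯ < r_m = n` of `{1, …, n}`, summing
`Lⁿ(i, j; k, l)` over all outputs `k, l ∈ {0,1}ⁿ` with `g_π(k) = 𝔨` and `g_π(l) = 𝔩`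
recovers `Lᵐ(𝔦, 𝔧; 𝔨, 𝔩)`, whenever `g_π(i) = 𝔦` and `g_π(j) = 𝔧`. -/
theorem Ln_mod_two_erasure
    (b1 b2 : ℝ) (hb1 : b1 ∈ Set.Icc (0 : ℝ) 1) (hb2 : b2 ∈ Set.Icc (0 : ℝ) 1)
    (n m : ℕ) (hm : 1 ≤ m)
    (r : Fin m → ℕ) (hmono : StrictMono r)
    (hfirst : 1 ≤ r ⟨0, hm⟩)
    (hlast : r ⟨m - 1, Nat.sub_lt hm Nat.one_pos⟩ = n)
    (fi fj fk fl : Fin m → Bool)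
    (i j : Fin n → Bool)
    (hi : gpi r i = fi) (hj : gpi r j = fj) :
    ∑ k ∈ Finset.univ.filter (fun k : Fin n → Bool => gpi r k = fk),
      ∑ l ∈ Finset.univ.filter (fun l : Fin n → Bool => gpi r l = fl),
        Ln b1 b2 i j k l = Ln b1 b2 fi fj fk fl := by
  classical
  subst hi
  subst hj
  have hm1 : ∀ κ : Fin m, 1 ≤ r κ := by
    intro κ
    calc 1 ≤ r ⟨0, hm⟩ := hfirst
      _ ≤ r κ := hmono.monotone (by rw [Fin.le_def]; exact Nat.zero_le _)
  have hrn : ∀ κ : Fin m, r κ ≤ n := by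
    intro κ
    rw [← hlast]
    exact hmono.monotone (by rw [Fin.le_def]; simp only [Fin.val_mk]; omega)
  set pos : Fin m → Fin n := fun κ =>
    ⟨r κ - 1, by have := hm1 κ; have := hrn κ; omega⟩ with hpos
  have pos_inj : Function.Injective pos := by
    intro a b hab
    have hv : r a - 1 = r b - 1 := congrArg Fin.val hab
    exact hmono.injective (by have := hm1 a; have := hm1 b; omega)
  have sp_pos : ∀ (x : Fin n → Bool) (κ : Fin m),
      sproj x (pos κ) = decide (cnt x (r κ) % 2 = 1) := by
    intro x κ
    rw [sproj_eq_cnt]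
    have hv : (pos κ).val + 1 = r κ := by
      simp only [hpos]
      have := hm1 κ
      omega
    rw [hv]
  have gpi_iff : ∀ (x : Fin n → Bool) (fx : Fin m → Bool),
      gpi r x = fx ↔ ∀ κ, sproj x (pos κ) = sproj fx κ := by
    intro x fx
    rw [equiv_parity r hmono]
    apply forall_congr'
    intro κ
    rw [sp_pos, sproj_eq_cnt, decide_parity_eq]
  set pin : Fin n → Option (Bool × Bool) := fun t =>
    if h : ∃ κ : Fin m, pos κ = t then some (sproj fk h.choose, sproj fl h.choose)
    else none with hpin
  have pin_pos : ∀ κ, pin (pos κ) = some (sproj fk κ, sproj fl κ) := by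
    intro κ
    have hex : ∃ κ' : Fin m, pos κ' = pos κ := ⟨κ, rfl⟩
    simp only [hpin]
    rw [dif_pos hex]
    have hch : hex.choose = κ := pos_inj hex.choose_spec
    rw [hch]
  have pin_none : ∀ t, (¬ ∃ κ, pos κ = t) → pin t = none := by
    intro t h
    simp only [hpin]
    exact dif_neg h
  have cond_iff : ∀ K L : Fin n → Bool,
      (∀ t, pmB (pin t) (K t) (L t)) ↔
        ((∀ κ, K (pos κ) = sproj fk κ) ∧ (∀ κ, L (pos κ) = sproj fl κ)) := by
    intro K L
    constructor
    · intro h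
      constructor <;> intro κ <;>
        · have hh := h (pos κ)
          rw [pin_pos κ] at hh
          simp only [pmB, Bool.and_eq_true, beq_iff_eq] at hh
          tauto
    · rintro ⟨h1, h2⟩ t
      by_cases hex : ∃ κ, pos κ = t
      · obtain ⟨κ, hκ⟩ := hex
        subst hκ
        rw [pin_pos κ]
        simp [pmB, h1 κ, h2 κ]
      · rw [pin_none t hex]
        rfl
  simp only [Finset.sum_filter]
  have pull : ∀ (P : Prop) (_ : Decidable P) (f : (Fin n → Bool) → ℝ),
      (if P then (∑ l : Fin n → Bool, f l) else 0)
        = ∑ l : Fin n → Bool, (if P then f l else 0) := by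
    intro P hP f
    split_ifs
    · rfl
    · simp
  simp_rw [pull]
  have summand_eq : ∀ k lv : Fin n → Bool,
      (if gpi r k = fk then (if gpi r lv = fl then Ln b1 b2 i j k lv else 0) else 0)
      = (if (∀ t, pmB (pin t) (sproj k t) (sproj lv t)) then
          ev b1 b2 ((∏ t, Lhat1 (sproj i t) (sproj j t) (sproj k t) (sproj lv t)) * 1)
        else 0) := by
    intro k lv
    by_cases h1 : gpi r k = fk <;> by_cases h2 : gpi r lv = fl
    · rw [if_pos h1, if_pos h2,
        if_pos ((cond_iff _ _).mpr ⟨(gpi_iff k fk).mp h1, (gpi_iff lv fl).mp h2⟩),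
        Ln, Lhatn_eq_prod, mul_one]
    · rw [if_pos h1, if_neg h2, if_neg
        (fun hc => h2 ((gpi_iff lv fl).mpr ((cond_iff _ _).mp hc).2))]
    · rw [if_neg h1, if_neg
        (fun hc => h1 ((gpi_iff k fk).mpr ((cond_iff _ _).mp hc).1))]
    · rw [if_neg h1, if_neg
        (fun hc => h1 ((gpi_iff k fk).mpr ((cond_iff _ _).mp hc).1))]
  simp_rw [summand_eq]
  have chv1 : ∀ k : Fin n → Bool,
      (∑ lv : Fin n → Bool,
        if (∀ t, pmB (pin t) (sproj k t) (sproj lv t)) then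
          ev b1 b2 ((∏ t, Lhat1 (sproj i t) (sproj j t) (sproj k t) (sproj lv t)) * 1)
        else 0)
      = ∑ L : Fin n → Bool,
        if (∀ t, pmB (pin t) (sproj k t) (L t)) then
          ev b1 b2 ((∏ t, Lhat1 (sproj i t) (sproj j t) (sproj k t) (L t)) * 1)
        else 0 := by
    intro k
    exact sum_comp_sproj (fun L => if (∀ t, pmB (pin t) (sproj k t) (L t)) then
      ev b1 b2 ((∏ t, Lhat1 (sproj i t) (sproj j t) (sproj k t) (L t)) * 1) else 0)
  simp_rw [chv1]
  rw [sum_comp_sproj (fun K => ∑ L : Fin n → Bool,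
    if (∀ t, pmB (pin t) (K t) (L t)) then
      ev b1 b2 ((∏ t, Lhat1 (sproj i t) (sproj j t) (K t) (L t)) * 1) else 0)]
  rw [main b1 b2 n (sproj i) (sproj j) pin 1]
  rw [Ln, Lhatn_eq_prod, mul_one]
  congr 1
  rw [← Finset.prod_subset (Finset.subset_univ ((Finset.univ : Finset (Fin m)).image pos))
    (by
      intro t _ ht
      have hex : ¬ ∃ κ, pos κ = t := by
        intro ⟨κ, hκ⟩
        exact ht (Finset.mem_image.mpr ⟨κ, Finset.mem_univ κ, hκ⟩)
      rw [pin_none t hex]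
      rfl)]
  rw [Finset.prod_image (fun a _ b _ hab => pos_inj hab)]
  apply Finset.prod_congr rfl
  intro κ _
  rw [pin_pos κ]
  have hI : sproj i (pos κ) = sproj (gpi r i) κ := (gpi_iff i (gpi r i)).mp rfl κ
  have hJ : sproj j (pos κ) = sproj (gpi r j) κ := (gpi_iff j (gpi r j)).mp rfl κ
  rw [hI, hJ]
  rfl
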